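/- There do not exist five unit vectors y_1, ..., y_5 in ℝ^3 with ∑_{j=1}^5 y_j = 0 such that for every j ∈ {1, ..., 5}, among the four indices l ≠ j there are exactly two with ⟨y_j, y_l⟩ = 0 and exactly two with ⟨y_j, y_l⟩ = −1/2. -/

import Mathlib

/-- There do not exist five unit vectors `y_1, ..., y_5` in `ℝ³`
summing to zero such that for every `j`, among the four indices `l ≠ j` exactly two
satisfy `⟨y_j, y_l⟩ = 0` and exactly two satisfy `⟨y_j, y_l⟩ = -1/2`. -/
theorem no_zero_summing_configuration :
    ¬ ∃ y : Fin 5 → EuclideanSpace ℝ (Fin 3),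
      (∀ j, ‖y j‖ = 1) ∧ (∑ j, y j = 0) ∧
      ∀ j, {l | l ≠ j ∧ (inner ℝ (y j) (y l) : ℝ) = 0}.ncard = 2 ∧
           {l | l ≠ j ∧ (inner ℝ (y j) (y l) : ℝ) = -(1 / 2)}.ncard = 2 := by
  rintro ⟨y, hnorm, -, hst⟩
  classical
  -- Step 1: for each j, the sum over l ≠ j of ⟨y j, y l⟩ ^ 2 is 1/2
  have key : ∀ j, ∑ l ∈ Finset.univ.erase j, (inner ℝ (y j) (y l) : ℝ) ^ 2 = 1 / 2 := by
    intro j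
    obtain ⟨h0, h1⟩ := hst j
    have hfin0 : ({l | l ≠ j ∧ (inner ℝ (y j) (y l) : ℝ) = 0}).Finite := Set.toFinite _
    have hfin1 : ({l | l ≠ j ∧ (inner ℝ (y j) (y l) : ℝ) = -(1 / 2)}).Finite := Set.toFinite _
    set F0 := hfin0.toFinset with hF0
    set F1 := hfin1.toFinset with hF1
    have hc0 : F0.card = 2 := by rw [hF0, ← Set.ncard_eq_toFinset_card _ hfin0]; exact h0
    have hc1 : F1.card = 2 := by rw [hF1, ← Set.ncard_eq_toFinset_card _ hfin1]; exact h1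
    have hdisj : Disjoint F0 F1 := by
      rw [Finset.disjoint_left]
      intro a ha hb
      rw [hF0, Set.Finite.mem_toFinset] at ha
      rw [hF1, Set.Finite.mem_toFinset] at hb
      have := ha.2.symm.trans hb.2
      norm_num at this
    have hsub : F0 ∪ F1 ⊆ Finset.univ.erase j := by
      intro a ha
      rw [Finset.mem_union] at ha
      rw [Finset.mem_erase]
      rcases ha with ha | ha
      · rw [hF0, Set.Finite.mem_toFinset] at ha; exact ⟨ha.1, Finset.mem_univ a⟩
      · rw [hF1, Set.Finite.mem_toFinset] at ha; exact ⟨ha.1, Finset.mem_univ a⟩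
    have hcard : (Finset.univ.erase j).card = 4 := by
      rw [Finset.card_erase_of_mem (Finset.mem_univ j)]; simp
    have hunion : F0 ∪ F1 = Finset.univ.erase j := by
      apply Finset.eq_of_subset_of_card_le hsub
      rw [hcard, Finset.card_union_of_disjoint hdisj, hc0, hc1]
    rw [← hunion, Finset.sum_union hdisj]
    have e0 : ∑ l ∈ F0, (inner ℝ (y j) (y l) : ℝ) ^ 2 = 0 := by
      apply Finset.sum_eq_zero
      intro a ha
      rw [hF0, Set.Finite.mem_toFinset] at ha
      rw [ha.2]; ring
    have e1 : ∑ l ∈ F1, (inner ℝ (y j) (y l) : ℝ) ^ 2 = 1 / 2 := by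
      have hv : ∀ a ∈ F1, (inner ℝ (y j) (y a) : ℝ) ^ 2 = 1 / 4 := by
        intro a ha
        rw [hF1, Set.Finite.mem_toFinset] at ha
        rw [ha.2]; norm_num
      rw [Finset.sum_congr rfl hv, Finset.sum_const, hc1]
      norm_num
    rw [e0, e1]; norm_num
  -- Step 2: total frame potential is 15/2
  have hA : ∑ j, ∑ l, (inner ℝ (y j) (y l) : ℝ) ^ 2 = 15 / 2 := by
    have : ∀ j : Fin 5, ∑ l, (inner ℝ (y j) (y l) : ℝ) ^ 2 = 3 / 2 := by
      intro j
      rw [← Finset.sum_erase_add _ _ (Finset.mem_univ j), key j,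
        real_inner_self_eq_norm_sq, hnorm]
      norm_num
    rw [Finset.sum_congr rfl (fun j _ => this j)]
    simp; norm_num
  -- Step 3: rewrite frame potential in coordinates
  set M : Fin 3 → Fin 3 → ℝ := fun i k => ∑ j, y j i * y j k with hM
  have hMA : ∑ i, ∑ k, M i k ^ 2 = 15 / 2 := by
    rw [← hA]
    have expand : ∀ j l : Fin 5, (inner ℝ (y j) (y l) : ℝ) ^ 2
        = ∑ i, ∑ k, (y j i * y j k) * (y l i * y l k) := by
      intro j l
      rw [PiLp.inner_apply]
      simp only [RCLike.inner_apply, conj_trivial]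
      rw [sq, Finset.sum_mul_sum]
      apply Finset.sum_congr rfl; intro i _
      apply Finset.sum_congr rfl; intro k _
      ring
    calc ∑ i, ∑ k, M i k ^ 2
        = ∑ i, ∑ k, ∑ j, ∑ l, (y j i * y j k) * (y l i * y l k) := by
          apply Finset.sum_congr rfl; intro i _
          apply Finset.sum_congr rfl; intro k _
          rw [hM, sq, Finset.sum_mul_sum]
      _ = ∑ i, ∑ j, ∑ k, ∑ l, (y j i * y j k) * (y l i * y l k) :=
          Finset.sum_congr rfl (fun i _ => by rw [Finset.sum_comm])
      _ = ∑ j, ∑ i, ∑ k, ∑ l, (y j i * y j k) * (y l i * y l k) := by rw [Finset.sum_comm]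
      _ = ∑ j, ∑ i, ∑ l, ∑ k, (y j i * y j k) * (y l i * y l k) :=
          Finset.sum_congr rfl (fun j _ => Finset.sum_congr rfl (fun i _ => by rw [Finset.sum_comm]))
      _ = ∑ j, ∑ l, ∑ i, ∑ k, (y j i * y j k) * (y l i * y l k) :=
          Finset.sum_congr rfl (fun j _ => by rw [Finset.sum_comm])
      _ = ∑ j, ∑ l, (inner ℝ (y j) (y l) : ℝ) ^ 2 := by
          apply Finset.sum_congr rfl; intro j _
          apply Finset.sum_congr rfl; intro l _
          rw [expand]
  -- Step 4: trace is 5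
  have htr : ∑ i, M i i = 5 := by
    rw [hM]
    rw [Finset.sum_comm]
    have : ∀ j : Fin 5, ∑ i, y j i * y j i = 1 := by
      intro j
      have : (inner ℝ (y j) (y j) : ℝ) = 1 := by
        rw [real_inner_self_eq_norm_sq, hnorm]; norm_num
      rw [PiLp.inner_apply] at this
      simpa [← sq] using this
    rw [Finset.sum_congr rfl (fun j _ => this j)]
    simp
  -- Step 5: Cauchy-Schwarz contradiction
  have hdiag : ∑ i, M i i ^ 2 ≤ 15 / 2 := by
    rw [← hMA]
    apply Finset.sum_le_sum
    intro i _
    exact Finset.single_le_sum (fun k _ => sq_nonneg (M i k)) (Finset.mem_univ i)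
  have hcs : (∑ i, M i i) ^ 2 ≤ 3 * ∑ i, M i i ^ 2 := by
    have := sq_sum_le_card_mul_sum_sq (s := (Finset.univ : Finset (Fin 3))) (f := fun i => M i i)
    simpa using this
  rw [htr] at hcs
  nlinarith
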